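/- Let n, d be positive integers. In the ring of formal power series over ℤ we have the identity (1 − t)^n · Σ_{i≥0} C(n + i·d − 1, n − 1) · t^i = Σ_{j≥0} A^{n,d}_{jd} · t^j; the right-hand side is a polynomial, since A^{n,d}_{jd} = 0 for jd > n(d−1). -/

import Mathlib

/-- the integers `A^{n,d}_i` defined by `(1 + T + ⋯ + T^{d−1})^n = Σ_i A^{n,d}_i T^i`. -/
noncomputable def A (n d i : ℕ) : ℕ :=
  ((∑ j ∈ Finset.range d, (Polynomial.X : Polynomial ℕ) ^ j) ^ n).coeff i

open PowerSeries Finset in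
lemma A_cast (n d i : ℕ) :
    ((A n d i : ℤ)) =
      ((∑ j ∈ Finset.range d, (Polynomial.X : Polynomial ℤ) ^ j) ^ n).coeff i := by
  have h : (∑ j ∈ Finset.range d, (Polynomial.X : Polynomial ℤ) ^ j) =
      Polynomial.map (Nat.castRingHom ℤ)
        (∑ j ∈ Finset.range d, (Polynomial.X : Polynomial ℕ) ^ j) := by
    rw [Polynomial.map_sum]
    simp
  rw [h, ← Polynomial.map_pow, Polynomial.coeff_map]
  rfl

open PowerSeries Finset in
lemma coeff_one_sub_X_pow_mul (e n k : ℕ) (F : PowerSeries ℤ) :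
    PowerSeries.coeff (R := ℤ) k ((1 - PowerSeries.X ^ e) ^ n * F) =
      ∑ m ∈ Finset.range (n + 1),
        (-1 : ℤ) ^ m * n.choose m *
          (if m * e ≤ k then PowerSeries.coeff (R := ℤ) (k - m * e) F else 0) := by
  have h : (1 - PowerSeries.X ^ e : PowerSeries ℤ) ^ n =
      ∑ m ∈ Finset.range (n + 1),
        PowerSeries.C (R := ℤ) ((-1 : ℤ) ^ m * n.choose m) * PowerSeries.X ^ (m * e) := by
    rw [sub_eq_add_neg, add_comm, add_pow]
    refine Finset.sum_congr rfl fun m hm => ?_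
    rw [neg_pow, one_pow, mul_one, ← pow_mul]
    simp only [map_mul, map_pow, map_neg, map_one, map_natCast]
    ring
  rw [h, Finset.sum_mul, map_sum]
  refine Finset.sum_congr rfl fun m hm => ?_
  rw [mul_assoc, PowerSeries.coeff_C_mul, PowerSeries.coeff_X_pow_mul']

open PowerSeries Finset in
lemma key_identity (n d : ℕ) (hn : 0 < n) :
    ((1 - PowerSeries.X ^ d : PowerSeries ℤ) ^ n) * (PowerSeries.invOneSubPow ℤ n).val =
      PowerSeries.mk (fun i => (A n d i : ℤ)) := by
  have hgeom : (1 - PowerSeries.X : PowerSeries ℤ) * (∑ j ∈ Finset.range d, PowerSeries.X ^ j) =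
      1 - PowerSeries.X ^ d := mul_neg_geom_sum _ d
  have hU : (1 - PowerSeries.X : PowerSeries ℤ) ^ n * (PowerSeries.invOneSubPow ℤ n).val = 1 := by
    rw [← PowerSeries.invOneSubPow_inv_eq_one_sub_pow]
    exact (PowerSeries.invOneSubPow ℤ n).inv_val
  have hcoe : ((∑ j ∈ Finset.range d, (Polynomial.X : Polynomial ℤ) ^ j : Polynomial ℤ) :
      PowerSeries ℤ) = ∑ j ∈ Finset.range d, PowerSeries.X ^ j := by
    rw [← Polynomial.coeToPowerSeries.ringHom_apply, map_sum]
    refine Finset.sum_congr rfl fun j hj => ?_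
    rw [map_pow, Polynomial.coeToPowerSeries.ringHom_apply, Polynomial.coe_X]
  calc (1 - PowerSeries.X ^ d : PowerSeries ℤ) ^ n * (PowerSeries.invOneSubPow ℤ n).val
      = (∑ j ∈ Finset.range d, PowerSeries.X ^ j) ^ n *
          ((1 - PowerSeries.X : PowerSeries ℤ) ^ n * (PowerSeries.invOneSubPow ℤ n).val) := by
        rw [← hgeom, mul_pow]; ring
    _ = (∑ j ∈ Finset.range d, PowerSeries.X ^ j) ^ n := by rw [hU, mul_one]
    _ = PowerSeries.mk (fun i => (A n d i : ℤ)) := by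
        rw [← hcoe, ← Polynomial.coe_pow]
        ext i
        rw [Polynomial.coeff_coe, PowerSeries.coeff_mk, A_cast]

/-- In `ℤ⟦t⟧` one has `(1 − t)^n · Σ_{i≥0} C(n + i·d − 1, n − 1) t^i = Σ_{j≥0} A^{n,d}_{jd} t^j`;
moreover the right-hand side is a polynomial since `A^{n,d}_{jd} = 0` for `jd > n(d−1)`. -/
theorem generating_function_A
    (n d : ℕ) (hn : 0 < n) (hd : 0 < d) :
    ((1 - PowerSeries.X : PowerSeries ℤ) ^ n *
        PowerSeries.mk (fun i => ((n + i * d - 1).choose (n - 1) : ℤ)) =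
      PowerSeries.mk (fun j => (A n d (j * d) : ℤ))) ∧
    ∀ j : ℕ, n * (d - 1) < j * d → A n d (j * d) = 0 := by
  constructor
  · have hUval : (PowerSeries.invOneSubPow ℤ n).val =
        PowerSeries.mk (fun i => ((n - 1 + i).choose (n - 1) : ℤ)) := by
      rw [PowerSeries.invOneSubPow_val_eq_mk_sub_one_add_choose_of_pos ℤ n hn]
    have hkey := key_identity n d hn
    rw [hUval] at hkey
    ext k
    have hA : ((A n d (k * d) : ℤ)) = PowerSeries.coeff (R := ℤ) (k * d)
        ((1 - PowerSeries.X ^ d) ^ n *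
          PowerSeries.mk fun i => ((n - 1 + i).choose (n - 1) : ℤ)) := by
      rw [hkey, PowerSeries.coeff_mk]
    rw [PowerSeries.coeff_mk, hA]
    rw [show (1 - PowerSeries.X : PowerSeries ℤ) = 1 - PowerSeries.X ^ 1 by rw [pow_one],
      coeff_one_sub_X_pow_mul, coeff_one_sub_X_pow_mul]
    refine Finset.sum_congr rfl fun m hm => ?_
    congr 1
    by_cases hmk : m ≤ k
    · rw [if_pos (by simpa using hmk), if_pos (Nat.mul_le_mul_right d hmk),
        PowerSeries.coeff_mk, PowerSeries.coeff_mk]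
      rw [mul_one, Nat.sub_mul]
      have h2 : m * d ≤ k * d := Nat.mul_le_mul_right d hmk
      have h3 : n + (k * d - m * d) - 1 = n - 1 + (k * d - m * d) := by omega
      rw [h3]
    · rw [if_neg (by simpa using hmk), if_neg (fun h => hmk (Nat.le_of_mul_le_mul_right h hd))]
  · intro j hj
    have hdeg : (∑ j ∈ Finset.range d, (Polynomial.X : Polynomial ℕ) ^ j).natDegree ≤ d - 1 := by
      refine Polynomial.natDegree_sum_le_of_forall_le _ _ fun i hi => ?_
      rw [Polynomial.natDegree_X_pow]
      have := Finset.mem_range.mp hi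
      omega
    have hdeg2 : ((∑ j ∈ Finset.range d, (Polynomial.X : Polynomial ℕ) ^ j) ^ n).natDegree ≤
        n * (d - 1) :=
      Polynomial.natDegree_pow_le.trans (Nat.mul_le_mul_left n hdeg)
    exact Polynomial.coeff_eq_zero_of_natDegree_lt (lt_of_le_of_lt hdeg2 hj)
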